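/- Let G be an abelian group with torsion subgroup H = t(G). If r_0(G)·ℵ₀ < |G| (i.e., the free rank of G is strictly less than |G| and G is uncountable) and G is w-divisible, then H is w-divisible and |H| = |G|. -/

import Mathlib

/-- The subgroup `nG = {n • g : g ∈ G}` of an abelian group `G`. -/
def nsmulRange (n : ℕ) (G : Type) [AddCommGroup G] : AddSubgroup G :=
  (n • AddMonoidHom.id G).range

/-- An abelian group is `w`-divisible if `|nG| = |G|` for every positive integer `n`. -/
def WDivisible (G : Type) [AddCommGroup G] : Prop :=
  ∀ n : ℕ, 0 < n → Cardinal.mk ↥(nsmulRange n G) = Cardinal.mk G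

/-- An abelian group is strongly unbounded if it contains an internal direct sum
`⊕_{i ∈ I} A_i` of subgroups with `|I| = |G|` and each `A_i` unbounded
(of infinite exponent). -/
def StronglyUnbounded (G : Type) [AddCommGroup G] : Prop :=
  ∃ (I : Type) (A : I → AddSubgroup G), Cardinal.mk I = Cardinal.mk G ∧
    iSupIndep A ∧ ∀ i, ∀ n : ℕ, 0 < n → ∃ a ∈ A i, n • a ≠ 0

lemma mem_nsmulRange {G : Type} [AddCommGroup G] {n : ℕ} {x : G} :
    x ∈ nsmulRange n G ↔ ∃ g : G, n • g = x := by
  simp [nsmulRange, AddMonoidHom.mem_range]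

lemma nsmulRange_one (G : Type) [AddCommGroup G] : nsmulRange 1 G = ⊤ := by
  ext x
  simp only [AddSubgroup.mem_top, iff_true, mem_nsmulRange]
  exact ⟨x, one_smul _ x⟩

lemma coe_finAddOrder {G : Type} [AddCommGroup G] {K : AddSubgroup G} {x : ↥K} :
    IsOfFinAddOrder x ↔ IsOfFinAddOrder (x : G) := by
  rw [isOfFinAddOrder_iff_nsmul_eq_zero, isOfFinAddOrder_iff_nsmul_eq_zero]
  constructor
  · rintro ⟨m, hm, h⟩
    refine ⟨m, hm, ?_⟩
    have := congrArg (Subtype.val) h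
    push_cast at this
    simpa using this
  · rintro ⟨m, hm, h⟩
    refine ⟨m, hm, Subtype.ext ?_⟩
    push_cast
    simpa using h

/-- Cardinality bound: `|K| ≤ max(rank K, ℵ₀) * |t(K)|`. -/
lemma card_le_rank_mul_torsion (K : Type) [AddCommGroup K] :
    Cardinal.mk K ≤
      max (Module.rank ℤ K) Cardinal.aleph0 * Cardinal.mk ↥(AddCommGroup.torsion K) := by
  classical
  obtain ⟨I, hind, hmax⟩ := exists_maximal_linearIndepOn ℤ (id : K → K)
  set S : Submodule ℤ K := Submodule.span ℤ I with hS
  have hall : ∀ x : K, ∃ a : ℤ, a ≠ 0 ∧ a • x ∈ S := by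
    intro x
    by_cases hx : x ∈ I
    · exact ⟨1, one_ne_zero, by simpa using Submodule.subset_span hx⟩
    · obtain ⟨c, hc, hmem⟩ := hmax x hx
      exact ⟨c, hc, by simpa [hS] using hmem⟩
  choose a ha hmem using hall
  set f : K → ℤ × S := fun x => (a x, ⟨a x • x, hmem x⟩) with hf
  set h : Set.range f → K := fun z => Classical.choose z.2 with hh
  have hfh : ∀ z : Set.range f, f (h z) = z := fun z => Classical.choose_spec z.2
  have htor : ∀ x : K, x - h ⟨f x, Set.mem_range_self x⟩ ∈ AddCommGroup.torsion K := by
    intro x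
    set y := h ⟨f x, Set.mem_range_self x⟩ with hy
    have hfy : f y = f x := hfh _
    have h1 : a y = a x := congrArg Prod.fst hfy
    have h2 : a y • y = a x • x := congrArg (fun p : ℤ × S => (p.2 : K)) hfy
    rw [h1] at h2
    have h3 : a x • (x - y) = 0 := by rw [smul_sub, h2, sub_self]
    exact isOfFinAddOrder_iff_zsmul_eq_zero.2 ⟨a x, ha x, h3⟩
  set F : K → (ℤ × S) × ↥(AddCommGroup.torsion K) :=
    fun x => (f x, ⟨x - h ⟨f x, Set.mem_range_self x⟩, htor x⟩) with hF
  have hinj : Function.Injective F := by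
    intro x x' hxx
    have h1 : f x = f x' := congrArg Prod.fst hxx
    have h2 : x - h ⟨f x, Set.mem_range_self x⟩ = x' - h ⟨f x', Set.mem_range_self x'⟩ :=
      congrArg (fun p : (ℤ × S) × ↥(AddCommGroup.torsion K) => (p.2 : K)) hxx
    have h3 : h ⟨f x, Set.mem_range_self x⟩ = h ⟨f x', Set.mem_range_self x'⟩ := by
      congr 1
      exact Subtype.ext h1
    rw [h3] at h2
    exact sub_left_inj.mp h2
  have hcard : Cardinal.mk K ≤
      (Cardinal.mk ℤ * Cardinal.mk S) * Cardinal.mk ↥(AddCommGroup.torsion K) := by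
    have := Cardinal.mk_le_of_injective hinj
    simpa using this
  have hspan : Cardinal.mk S ≤ max (Cardinal.mk I) Cardinal.aleph0 := by
    have hr : LinearMap.range (Finsupp.linearCombination ℤ ((↑) : I → K)) = S := by
      rw [Finsupp.range_linearCombination, Subtype.range_coe]
    have h2 : Cardinal.mk ↥(LinearMap.range (Finsupp.linearCombination ℤ ((↑) : I → K)))
        ≤ Cardinal.mk (I →₀ ℤ) :=
      Cardinal.mk_le_of_surjective (LinearMap.surjective_rangeRestrict _)
    rw [hr] at h2
    refine h2.trans ?_
    cases isEmpty_or_nonempty I with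
    | inl hI =>
        exact (Cardinal.mk_le_aleph0).trans (le_max_right _ _)
    | inr hI =>
        rw [Cardinal.mk_finsupp_of_infinite' ↥I ℤ, Cardinal.mk_int]
  have hIle : Cardinal.mk I ≤ Module.rank ℤ K := LinearIndependent.cardinal_le_rank hind
  refine hcard.trans ?_
  have hstep : Cardinal.mk ℤ * Cardinal.mk S ≤ max (Module.rank ℤ K) Cardinal.aleph0 := by
    rw [Cardinal.mk_int]
    have : Cardinal.mk S ≤ max (Module.rank ℤ K) Cardinal.aleph0 :=
      hspan.trans (max_le_max hIle le_rfl)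
    calc Cardinal.aleph0 * Cardinal.mk S
        ≤ Cardinal.aleph0 * max (Module.rank ℤ K) Cardinal.aleph0 := by
          exact mul_le_mul' le_rfl this
      _ = max (Module.rank ℤ K) Cardinal.aleph0 := by
          rw [Cardinal.mul_eq_max le_rfl (le_max_right _ _)]
          exact max_eq_right (le_max_right _ _)
  exact mul_le_mul' hstep le_rfl

/-- `n ⬝ t(G)` is equinumerous with `t(nG)`. -/
lemma nsmul_torsion_equiv (G : Type) [AddCommGroup G] (n : ℕ) (hn : 0 < n) :
    Cardinal.mk ↥(nsmulRange n ↥(AddCommGroup.torsion G)) =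
      Cardinal.mk ↥(AddCommGroup.torsion ↥(nsmulRange n G)) := by
  apply Cardinal.mk_congr
  refine ⟨fun p => ⟨⟨(p.1 : G), ?_⟩, ?_⟩, fun q => ⟨⟨(q.1 : G), ?_⟩, ?_⟩, ?_, ?_⟩
  · obtain ⟨g, hg⟩ := mem_nsmulRange.mp p.2
    exact mem_nsmulRange.mpr ⟨(g : G), by rw [← hg]; push_cast; simp⟩
  · have hx : IsOfFinAddOrder ((p.1 : G)) := (AddCommGroup.mem_torsion _).mp p.1.2
    exact (AddCommGroup.mem_torsion _).mpr (coe_finAddOrder.mpr hx)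
  · have hx : IsOfFinAddOrder (q.1 : ↥(nsmulRange n G)) := (AddCommGroup.mem_torsion _).mp q.2
    exact (AddCommGroup.mem_torsion _).mpr (coe_finAddOrder.mp hx)
  · -- q.1 ∈ n • torsion G
    have hx : IsOfFinAddOrder ((q.1 : G)) :=
      coe_finAddOrder.mp ((AddCommGroup.mem_torsion _).mp q.2)
    obtain ⟨g, hg⟩ := mem_nsmulRange.mp q.1.2
    have hgt : IsOfFinAddOrder g := by
      obtain ⟨m, hm, hmx⟩ := isOfFinAddOrder_iff_nsmul_eq_zero.mp hx
      refine isOfFinAddOrder_iff_nsmul_eq_zero.mpr ⟨m * n, by positivity, ?_⟩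
      rw [mul_smul, hg, hmx]
    refine mem_nsmulRange.mpr ⟨⟨g, (AddCommGroup.mem_torsion _).mpr hgt⟩, ?_⟩
    exact Subtype.ext (by push_cast; simpa using hg)
  · intro p
    exact Subtype.ext (Subtype.ext rfl)
  · intro q
    exact Subtype.ext (Subtype.ext rfl)

/-- If the free rank of `G` satisfies `r₀(G)·ℵ₀ < |G|` and `G` is `w`-divisible, then the
torsion subgroup `H = t(G)` is `w`-divisible and `|H| = |G|`. -/
theorem torsion_wDivisible_of_small_free_rank
    (G : Type) [AddCommGroup G]
    (hrank : Module.rank ℤ G * Cardinal.aleph0 < Cardinal.mk G)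
    (hwdiv : WDivisible G) :
    WDivisible ↥(AddCommGroup.torsion G) ∧
      Cardinal.mk ↥(AddCommGroup.torsion G) = Cardinal.mk G := by
  have key : ∀ n : ℕ, 0 < n →
      Cardinal.mk ↥(AddCommGroup.torsion ↥(nsmulRange n G)) = Cardinal.mk G := by
    intro n hn
    have hK : Cardinal.mk ↥(nsmulRange n G) = Cardinal.mk G := hwdiv n hn
    have htle : Cardinal.mk ↥(AddCommGroup.torsion ↥(nsmulRange n G)) ≤ Cardinal.mk G := by
      calc Cardinal.mk ↥(AddCommGroup.torsion ↥(nsmulRange n G))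
          ≤ Cardinal.mk ↥(nsmulRange n G) := Cardinal.mk_le_of_injective Subtype.val_injective
        _ = Cardinal.mk G := hK
    by_cases hr : Module.rank ℤ G = 0
    · have hall : ∀ x : G, IsOfFinAddOrder x := by
        intro x
        obtain ⟨c, hc, h0⟩ := rank_eq_zero_iff.mp hr x
        exact isOfFinAddOrder_iff_zsmul_eq_zero.2 ⟨c, hc, h0⟩
      have htop : AddCommGroup.torsion ↥(nsmulRange n G) = ⊤ := by
        ext x
        simp only [AddSubgroup.mem_top, iff_true]
        exact (AddCommGroup.mem_torsion _).mpr (coe_finAddOrder.mpr (hall x))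
      rw [htop]
      rw [Cardinal.mk_congr AddSubgroup.topEquiv.toEquiv]
      exact hK
    · have h0 : Cardinal.aleph0 < Cardinal.mk G := by
        refine lt_of_le_of_lt ?_ hrank
        have h1 : (1 : Cardinal) ≤ Module.rank ℤ G := Cardinal.one_le_iff_ne_zero.2 hr
        calc Cardinal.aleph0 = 1 * Cardinal.aleph0 := (one_mul _).symm
          _ ≤ Module.rank ℤ G * Cardinal.aleph0 := mul_le_mul' h1 le_rfl
      have hrK : Module.rank ℤ ↥(nsmulRange n G) ≤ Module.rank ℤ G :=
        LinearMap.rank_le_of_injective ((nsmulRange n G).subtype.toIntLinearMap)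
          Subtype.val_injective
      have hmaxlt : max (Module.rank ℤ ↥(nsmulRange n G)) Cardinal.aleph0 < Cardinal.mk G := by
        refine max_lt ?_ h0
        refine lt_of_le_of_lt (hrK.trans (Cardinal.le_mul_right ?_)) hrank
        exact Cardinal.aleph0_ne_zero
      rcases lt_or_eq_of_le htle with hlt | heq
      · exfalso
        have hb := card_le_rank_mul_torsion ↥(nsmulRange n G)
        have hlt2 := hb.trans_lt (Cardinal.mul_lt_of_lt h0.le hmaxlt hlt)
        rw [hK] at hlt2
        exact lt_irrefl _ hlt2
      · exact heq
  have E : ∀ n : ℕ, 0 < n →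
      Cardinal.mk ↥(nsmulRange n ↥(AddCommGroup.torsion G)) = Cardinal.mk G :=
    fun n hn => (nsmul_torsion_equiv G n hn).trans (key n hn)
  have hH : Cardinal.mk ↥(AddCommGroup.torsion G) = Cardinal.mk G := by
    have h1 := E 1 one_pos
    rw [nsmulRange_one] at h1
    rw [← h1]
    exact (Cardinal.mk_congr AddSubgroup.topEquiv.toEquiv).symm
  exact ⟨fun n hn => (E n hn).trans hH.symm, hH⟩
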